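/- Let (𝕍, K, η) be a para-Hermitian vector space with eigenspace decomposition 𝕍 = L₊ ⊕ L₋ and projections p± : 𝕍 → L±. Let L ⊆ 𝕍 be a maximally isotropic subspace with respect to η and set W = p₊(L). Then there exists a linear map Ω̄ : W → L₋ with η(Ω̄(u), v) = -η(u, Ω̄(v)) for all u, v ∈ W (i.e. inducing an alternating form on W via η) such that L = { u + Ω̄(u) + w : u ∈ W, w ∈ W̄ }, where W̄ = η^♯(Ann(W)) ∩ L₋ is the subspace of L₋ pairing trivially with W under η. -/

import Mathlib

/-!
STATEMENT 19: In a para-Hermitian vector space `(𝕍, K, η)` with eigenspace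
decomposition `𝕍 = L₊ ⊕ L₋`, any maximally isotropic subspace `L` with
`W = p₊(L)` is of the form `L = { u + Ω̄(u) + w : u ∈ W, w ∈ W̄ }`, where
`Ω̄ : W → L₋` is η-skew on `W` and `W̄ ⊆ L₋` is the subspace of `L₋` pairing
trivially with `W` under `η`. Here `p₊ = ½(1 + K)` is the projection onto
`L₊ = ker (K - 1)`, and `L₋ = ker (K + 1)`.
-/

variable {𝕍 : Type*} [AddCommGroup 𝕍] [Module ℝ 𝕍] [FiniteDimensional ℝ 𝕍]

lemma isotropic_two_finrank_le
    (η : 𝕍 →ₗ[ℝ] 𝕍 →ₗ[ℝ] ℝ)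
    (hsymm : ∀ x y, η x y = η y x)
    (hnd : ∀ x, (∀ y, η x y = 0) → x = 0)
    (M : Submodule ℝ 𝕍) (hM : ∀ x ∈ M, ∀ y ∈ M, η x y = 0) :
    2 * Module.finrank ℝ M ≤ Module.finrank ℝ 𝕍 := by
  set B : LinearMap.BilinForm ℝ 𝕍 := η with hB
  have hBnd : B.Nondegenerate :=
    ⟨fun x hx => hnd x hx, fun y hy => hnd y fun x => by rw [hsymm]; exact hy x⟩
  have hrefl : B.IsRefl := fun x y h => by rw [hB]; rw [hsymm]; exact h
  have hle : M ≤ B.orthogonal M := fun x hx => fun y hy => hM y hy x hx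
  have h1 : Module.finrank ℝ M ≤ Module.finrank ℝ (B.orthogonal M) :=
    Submodule.finrank_mono hle
  rw [LinearMap.BilinForm.finrank_orthogonal hBnd] at h1
  have h2 : Module.finrank ℝ M ≤ Module.finrank ℝ 𝕍 := M.finrank_le
  omega


theorem maximally_isotropic_structure_theorem
    (d : ℕ) (K : 𝕍 →ₗ[ℝ] 𝕍) (η : 𝕍 →ₗ[ℝ] 𝕍 →ₗ[ℝ] ℝ)
    (hK2 : K ∘ₗ K = LinearMap.id)
    (hKne1 : K ≠ LinearMap.id) (hKne2 : K ≠ -LinearMap.id)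
    (hdim : Module.finrank ℝ 𝕍 = 2 * d)
    (hplus : Module.finrank ℝ (LinearMap.ker (K - LinearMap.id)) = d)
    (hminus : Module.finrank ℝ (LinearMap.ker (K + LinearMap.id)) = d)
    (hsymm : ∀ x y, η x y = η y x)
    (hnd : ∀ x, (∀ y, η x y = 0) → x = 0)
    (hcompat : ∀ x y, η (K x) (K y) = - η x y)
    -- a maximally isotropic subspace L
    (L : Submodule ℝ 𝕍)
    (hiso : ∀ x ∈ L, ∀ y ∈ L, η x y = 0)
    (hL : Module.finrank ℝ L = d) :
    -- with W = p₊(L) the image of L under the projection p₊ = ½(1 + K):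
    ∃ Ωb : 𝕍 →ₗ[ℝ] 𝕍,
      -- Ω̄ takes values in L₋,
      (∀ x, Ωb x ∈ LinearMap.ker (K + LinearMap.id)) ∧
      -- Ω̄ is skew on W with respect to η (inducing an alternating form on W),
      (∀ u ∈ L.map ((2⁻¹ : ℝ) • (LinearMap.id + K)),
        ∀ v ∈ L.map ((2⁻¹ : ℝ) • (LinearMap.id + K)),
          η (Ωb u) v = - η u (Ωb v)) ∧
      -- and L = { u + Ω̄(u) + w : u ∈ W, w ∈ W̄ }
      (∀ x : 𝕍, x ∈ L ↔
        ∃ u ∈ L.map ((2⁻¹ : ℝ) • (LinearMap.id + K)),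
          ∃ w ∈ LinearMap.ker (K + LinearMap.id),
            (∀ u' ∈ L.map ((2⁻¹ : ℝ) • (LinearMap.id + K)), η w u' = 0) ∧
              x = u + Ωb u + w) := by
  set p : 𝕍 →ₗ[ℝ] 𝕍 := (2⁻¹ : ℝ) • (LinearMap.id + K) with hp
  set W : Submodule ℝ 𝕍 := L.map p with hWdef
  have hK2' : ∀ x, K (K x) = x := fun x => congrFun (congrArg DFunLike.coe hK2) x
  have hpapply : ∀ x, p x = (2⁻¹ : ℝ) • (x + K x) := by
    intro x; simp [hp]
  have hpfix : ∀ x, K (p x) = p x := by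
    intro x; simp [hpapply, smul_add, map_add, hK2' x, add_comm]
  have hWfix : ∀ u ∈ W, K u = u := by
    rintro u ⟨x, hx, rfl⟩; exact hpfix x
  have hpid : ∀ u, K u = u → p u = u := by
    intro u hu
    rw [hpapply, hu, ← two_smul ℝ u, smul_smul]
    norm_num
  -- from p x = u, get K x = 2 • u - x
  have hKx : ∀ x u, p x = u → K x = (2 : ℝ) • u - x := by
    intro x u h
    rw [hpapply] at h
    have h2 := congrArg (fun z => (2 : ℝ) • z) h
    simp only [smul_smul] at h2
    norm_num at h2
    rw [← h2]; abel
  have ηpp : ∀ x y, K x = x → K y = y → η x y = 0 := by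
    intro x y hx hy
    have := hcompat x y; rw [hx, hy] at this; linarith
  have ηmm : ∀ x y, K x = -x → K y = -y → η x y = 0 := by
    intro x y hx hy
    have := hcompat x y; rw [hx, hy] at this; simp at this; linarith
  -- complement part x - p x is in the (-1)-eigenspace
  have hpm : ∀ x, K (x - p x) = -(x - p x) := by
    intro x
    have : K (p x) = p x := hpfix x
    rw [map_sub, this, hKx x (p x) rfl]
    module
  -- η w y = 0 whenever K w = -w and η w u' = 0 for all u' ∈ W, y ∈ L
  have ηwL : ∀ w, K w = -w → (∀ u' ∈ W, η w u' = 0) → ∀ y ∈ L, η w y = 0 := by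
    intro w hw hw0 y hy
    have h1 : η w (p y) = 0 := hw0 (p y) ⟨y, hy, rfl⟩
    have h2 : η w (y - p y) = 0 := ηmm _ _ hw (hpm y)
    have := map_sub (η w) y (p y)
    rw [h2] at this
    linarith [h1]
  -- section
  have hFmem : ∀ x : L, p x ∈ W := fun x => ⟨x, x.2, rfl⟩
  set F : L →ₗ[ℝ] W := (p ∘ₗ L.subtype).codRestrict W hFmem with hF
  have hFsurj : LinearMap.range F = ⊤ := by
    rw [LinearMap.range_eq_top]
    rintro ⟨u, x, hx, rfl⟩
    exact ⟨⟨x, hx⟩, rfl⟩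
  obtain ⟨g, hg⟩ := F.exists_rightInverse_of_surjective hFsurj
  set s : W →ₗ[ℝ] 𝕍 := L.subtype ∘ₗ g with hs
  have hsL : ∀ u : W, s u ∈ L := fun u => (g u).2
  have hsp : ∀ u : W, p (s u) = (u : 𝕍) := by
    intro u
    have := congrFun (congrArg DFunLike.coe hg) u
    simpa [F, s, LinearMap.codRestrict] using congrArg (Subtype.val) this
  -- projection onto W
  obtain ⟨W', hW'⟩ := Submodule.exists_isCompl W
  set q : 𝕍 →ₗ[ℝ] W := W.linearProjOfIsCompl W' hW' with hq
  have hqW : ∀ u (hu : u ∈ W), q u = ⟨u, hu⟩ :=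
    fun u hu => Submodule.linearProjOfIsCompl_apply_left hW' ⟨u, hu⟩
  set Ωb : 𝕍 →ₗ[ℝ] 𝕍 := (s - W.subtype) ∘ₗ q with hΩdef
  have hΩW : ∀ u (hu : u ∈ W), Ωb u = s ⟨u, hu⟩ - u := by
    intro u hu
    simp [hΩdef, hqW u hu]
  -- Ωb takes values in the -1 eigenspace
  have hΩm : ∀ x, K (Ωb x) = -(Ωb x) := by
    intro x
    have h1 : Ωb x = s (q x) - (q x : 𝕍) := by simp [hΩdef]
    have h2 : K (s (q x)) = (2:ℝ) • ((q x : 𝕍)) - s (q x) := hKx _ _ (hsp (q x))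
    have h3 : K ((q x : 𝕍)) = (q x : 𝕍) := hWfix _ (q x).2
    rw [h1, map_sub, h2, h3]
    module
  refine ⟨Ωb, ?_, ?_, ?_⟩
  · intro x
    rw [LinearMap.mem_ker, LinearMap.add_apply, LinearMap.id_apply, hΩm x]
    abel
  · -- skewness
    intro u hu v hv
    have hu' : K u = u := hWfix u hu
    have hv' : K v = v := hWfix v hv
    rw [hΩW u hu, hΩW v hv]
    have h0 : η (s ⟨u, hu⟩) (s ⟨v, hv⟩) = 0 := hiso _ (hsL _) _ (hsL _)
    have hmu : K (s ⟨u, hu⟩ - u) = -(s ⟨u, hu⟩ - u) := by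
      have := hΩm u; rwa [hΩW u hu] at this
    have hmv : K (s ⟨v, hv⟩ - v) = -(s ⟨v, hv⟩ - v) := by
      have := hΩm v; rwa [hΩW v hv] at this
    have e1 : η u v = 0 := ηpp u v hu' hv'
    have e2 : η (s ⟨u, hu⟩ - u) (s ⟨v, hv⟩ - v) = 0 := ηmm _ _ hmu hmv
    have expand : η (s ⟨u, hu⟩) (s ⟨v, hv⟩)
        = η u v + η u (s ⟨v, hv⟩ - v) + η (s ⟨u, hu⟩ - u) v
          + η (s ⟨u, hu⟩ - u) (s ⟨v, hv⟩ - v) := by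
      have : s ⟨u, hu⟩ = u + (s ⟨u, hu⟩ - u) := by abel
      rw [this]
      have : s ⟨v, hv⟩ = v + (s ⟨v, hv⟩ - v) := by abel
      rw [this]
      simp [map_add]
      ring
    rw [h0] at expand
    linarith [expand, e1, e2]
  · intro x
    constructor
    · intro hx
      have hu : p x ∈ W := ⟨x, hx, rfl⟩
      refine ⟨p x, hu, x - s ⟨p x, hu⟩, ?_, ?_, ?_⟩
      · -- in ker (K + id)
        rw [LinearMap.mem_ker, LinearMap.add_apply, LinearMap.id_apply]
        have h2 : K (s ⟨p x, hu⟩) = (2:ℝ) • (p x) - s ⟨p x, hu⟩ := hKx _ _ (hsp _)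
        have h3 : K x = (2:ℝ) • (p x) - x := hKx x (p x) rfl
        rw [map_sub, h2, h3]
        abel
      · -- pairs to zero with W
        rintro u' ⟨y, hy, rfl⟩
        have hwm : K (x - s ⟨p x, hu⟩) = -(x - s ⟨p x, hu⟩) := by
          have h2 : K (s ⟨p x, hu⟩) = (2:ℝ) • (p x) - s ⟨p x, hu⟩ := hKx _ _ (hsp _)
          have h3 : K x = (2:ℝ) • (p x) - x := hKx x (p x) rfl
          rw [map_sub, h2, h3]; abel
        have hwL : η (x - s ⟨p x, hu⟩) y = 0 := by
          have a1 : η x y = 0 := hiso x hx y hy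
          have a2 : η (s ⟨p x, hu⟩) y = 0 := hiso _ (hsL _) y hy
          have := map_sub η x (s ⟨p x, hu⟩)
          calc η (x - s ⟨p x, hu⟩) y = η x y - η (s ⟨p x, hu⟩) y := by
                rw [map_sub]; simp
            _ = 0 := by rw [a1, a2]; ring
        have hwm2 : η (x - s ⟨p x, hu⟩) (y - p y) = 0 := ηmm _ _ hwm (hpm y)
        have : η (x - s ⟨p x, hu⟩) (p y) =
            η (x - s ⟨p x, hu⟩) y - η (x - s ⟨p x, hu⟩) (y - p y) := by
          rw [map_sub, map_sub]; ring
        rw [this, hwL, hwm2]; ring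
      · rw [hΩW (p x) hu]; abel
    · rintro ⟨u, hu, w, hwker, hw0, rfl⟩
      have hwm : K w = -w := by
        rw [LinearMap.mem_ker, LinearMap.add_apply, LinearMap.id_apply] at hwker
        linear_combination (norm := module) hwker
      -- x = s u + w ; need w ∈ L
      have hx : u + Ωb u + w = s ⟨u, hu⟩ + w := by rw [hΩW u hu]; abel
      rw [hx]
      refine Submodule.add_mem L (hsL _) ?_
      -- L ⊔ span {w} is isotropic
      set M : Submodule ℝ 𝕍 := L ⊔ Submodule.span ℝ {w} with hM
      have ηwL' : ∀ y ∈ L, η w y = 0 := ηwL w hwm hw0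
      have hMiso : ∀ a ∈ M, ∀ b ∈ M, η a b = 0 := by
        intro a ha b hb
        obtain ⟨ya, hya, za, hza, rfl⟩ := Submodule.mem_sup.mp ha
        obtain ⟨yb, hyb, zb, hzb, rfl⟩ := Submodule.mem_sup.mp hb
        obtain ⟨ca, rfl⟩ := Submodule.mem_span_singleton.mp hza
        obtain ⟨cb, rfl⟩ := Submodule.mem_span_singleton.mp hzb
        have e1 : η ya yb = 0 := hiso _ hya _ hyb
        have e2 : η w yb = 0 := ηwL' yb hyb
        have e3 : η w ya = 0 := ηwL' ya hya
        have e4 : η ya w = 0 := by rw [hsymm]; exact e3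
        have e5 : η w w = 0 := ηmm w w hwm hwm
        simp [map_add, map_smul, LinearMap.add_apply, LinearMap.smul_apply,
          e1, e2, e3, e4, e5]
      have hMle : 2 * Module.finrank ℝ M ≤ Module.finrank ℝ 𝕍 :=
        isotropic_two_finrank_le η hsymm hnd M hMiso
      have hLM : L ≤ M := le_sup_left
      have : Module.finrank ℝ M ≤ d := by omega
      have hEq : L = M := Submodule.eq_of_le_of_finrank_le hLM (by omega)
      have : w ∈ M := Submodule.mem_sup_right (Submodule.mem_span_singleton_self w)
      rwa [← hEq] at this
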